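/- For any ζ > 0 there exists c = c(ζ) > 1 such that: for all n and all k₁, k₂ with ζn ≤ k₁, k₂ ≤ (1/2 − ζ)n, if A ⊆ binom([n],k₁) and B ⊆ binom([n],k₂) are cross-intersecting and μ(A) > 1 − ε for some ε ∈ (0,1), then μ(B) = O_ζ(ε^c). -/

import Mathlib

open Finset


private lemma cast_choose_eq_prod_div (a k : ℕ) (hk : k ≤ a) :
    (a.choose k : ℝ) = (∏ i ∈ range k, ((a : ℝ) - i)) / (Nat.factorial k) := by
  have h1 : ((a.descFactorial k : ℕ) : ℝ) = ∏ i ∈ range k, ((a : ℝ) - i) := by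
    rw [Nat.descFactorial_eq_prod_range, Nat.cast_prod]
    refine Finset.prod_congr rfl fun i hi => ?_
    rw [mem_range] at hi
    exact Nat.cast_sub (le_of_lt (lt_of_lt_of_le hi hk))
  rw [eq_div_iff (by positivity : ((Nat.factorial k) : ℝ) ≠ 0)]
  rw [← h1]
  rw [Nat.descFactorial_eq_factorial_mul_choose]
  push_cast
  ring

private lemma choose_ratio (a n k : ℕ) (hk : k ≤ a) (han : a ≤ n) :
    (a.choose k : ℝ) / (n.choose k) = ∏ i ∈ range k, (((a : ℝ) - i) / ((n : ℝ) - i)) := by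
  rw [cast_choose_eq_prod_div a k hk, cast_choose_eq_prod_div n k (hk.trans han),
    Finset.prod_div_distrib]
  have hf : ((Nat.factorial k : ℕ) : ℝ) ≠ 0 := by positivity
  exact div_div_div_cancel_right₀ hf _ _

private lemma prod_shift (x : ℝ) :
    ∀ k : ℕ, (∏ i ∈ range k, (x + 1 - i)) * (x + 1 - k) = (x + 1) * ∏ i ∈ range k, (x - i)
  | 0 => by simp
  | (k + 1) => by
    rw [prod_range_succ, prod_range_succ]
    push_cast
    have := prod_shift x k
    linear_combination (x - (k : ℝ)) * this


-- If x ≥ 2ζ and x ≥ 1 - t with t ≥ 0, then x ≥ exp(-L t) where L = log(1/(2ζ))/(1-2ζ).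
private lemma exp_factor_bound (ζ t x : ℝ) (hζ0 : 0 < ζ) (hζ4 : ζ ≤ 1/4)
    (ht : 0 ≤ t) (hx1 : 2*ζ ≤ x) (hx2 : 1 - t ≤ x) :
    Real.exp (-(Real.log (1/(2*ζ)) / (1 - 2*ζ)) * t) ≤ x := by
  set L : ℝ := Real.log (1/(2*ζ)) / (1 - 2*ζ) with hL
  have h2ζ : 0 < 2*ζ := by linarith
  have h2ζ1 : 2*ζ ≤ 1/2 := by linarith
  have hden : (0:ℝ) < 1 - 2*ζ := by linarith
  have hlogpos : 0 < Real.log (1/(2*ζ)) := by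
    apply Real.log_pos
    rw [lt_div_iff₀ h2ζ]; linarith
  have hLpos : 0 < L := div_pos hlogpos hden
  have hkey : -L * (1 - 2*ζ) = Real.log (2*ζ) := by
    rw [hL]
    field_simp
    rw [Real.log_div one_ne_zero (ne_of_gt h2ζ), Real.log_one]
    ring
  rcases le_or_gt (1 - 2*ζ) t with hcase | hcase
  · -- t ≥ 1 - 2ζ : exp(-Lt) ≤ exp(-L(1-2ζ)) = 2ζ ≤ x
    calc Real.exp (-L * t) ≤ Real.exp (-L * (1 - 2*ζ)) := by
          apply Real.exp_le_exp.2
          have := mul_le_mul_of_nonneg_left hcase (le_of_lt hLpos)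
          nlinarith
      _ = 2*ζ := by rw [hkey, Real.exp_log h2ζ]
      _ ≤ x := hx1
  · -- t < 1 - 2ζ : convexity of exp
    set s : ℝ := t / (1 - 2*ζ) with hs
    have hs0 : 0 ≤ s := div_nonneg ht (le_of_lt hden)
    have hs1 : s ≤ 1 := by
      rw [hs, div_le_one hden]; linarith
    have hconv := convexOn_exp.2 (Set.mem_univ (0:ℝ)) (Set.mem_univ (Real.log (2*ζ)))
      (by linarith : (0:ℝ) ≤ 1 - s) hs0 (by ring)
    have harg : (1-s) • (0:ℝ) + s • Real.log (2*ζ) = -L * t := by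
      simp only [smul_eq_mul, mul_zero, zero_add]
      rw [← hkey, hs]
      field_simp
    rw [harg] at hconv
    calc Real.exp (-L * t) ≤ (1-s) * Real.exp 0 + s * Real.exp (Real.log (2*ζ)) := hconv
      _ = 1 - s * (1 - 2*ζ) := by rw [Real.exp_zero, Real.exp_log h2ζ]; ring
      _ = 1 - t := by rw [hs]; field_simp
      _ ≤ x := hx2
set_option maxHeartbeats 1000000 in
private lemma arith_main (ζ ε : ℝ) (n k₁ m κ : ℕ) (hζ0 : 0 < ζ) (hζ4 : ζ ≤ 1/4)
    (hk1l : ζ * n ≤ (k₁ : ℝ)) (hk1u : (k₁ : ℝ) ≤ (1/2 - ζ) * n)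
    (hml : (1/2 + ζ) * n ≤ (m : ℝ)) (hmκ : m ≤ κ) (hκn : κ + 1 ≤ n)
    (hε0 : 0 < ε)
    (hmain : (κ.choose k₁ : ℝ) < ε * n.choose k₁) :
    ((κ+1).choose m : ℝ) / (n.choose m) ≤
      (Real.exp (2*ζ) / (2*ζ)) * ε ^ (1 + 2*ζ*(1 - 2*ζ) / Real.log (1/(2*ζ))) := by
  have h2ζ : (0:ℝ) < 2*ζ := by linarith
  have hn1 : 1 ≤ n := le_trans (Nat.le_add_left 1 κ) hκn
  have hnR : (1:ℝ) ≤ (n:ℝ) := by exact_mod_cast hn1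
  have hnpos : (0:ℝ) < n := by linarith
  have hκnR : (κ:ℝ) + 1 ≤ (n:ℝ) := by exact_mod_cast hκn
  have hmκR : (m:ℝ) ≤ (κ:ℝ) := by exact_mod_cast hmκ
  have hk1m : (k₁:ℝ) + 2*ζ*n ≤ (m:ℝ) := by linarith
  have h2ζn : (0:ℝ) < 2*ζ*n := by positivity
  have hk1mR : (k₁:ℝ) < (m:ℝ) := by linarith
  have hk1mnat : k₁ ≤ m := by exact_mod_cast le_of_lt hk1mR
  have hk1κ : k₁ ≤ κ := le_trans hk1mnat hmκ
  have hκn' : κ ≤ n := by omega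
  have hk1n : k₁ ≤ n := le_trans hk1κ hκn'
  have hζn0 : (0:ℝ) ≤ ζ*n := by positivity
  have hk1half : 2*(k₁:ℝ) ≤ (n:ℝ) := by linarith
  -- names for logs
  set L : ℝ := Real.log (1/(2*ζ)) / (1 - 2*ζ) with hLdef
  have hden : (0:ℝ) < 1 - 2*ζ := by linarith
  have hlogpos : 0 < Real.log (1/(2*ζ)) := by
    apply Real.log_pos
    rw [lt_div_iff₀ h2ζ]; linarith
  have hLpos : 0 < L := div_pos hlogpos hden
  set c' : ℝ := 2*ζ*(1 - 2*ζ) / Real.log (1/(2*ζ)) with hc'def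
  have hc'pos : 0 < c' := by positivity
  have hc'L : c' * L = 2*ζ := by
    rw [hc'def, hLdef]
    field_simp
  set D : ℝ := (n:ℝ) - κ with hDdef
  have hD1 : 1 ≤ D := by rw [hDdef]; linarith
  -- products
  set Pκ : ℝ := ∏ i ∈ range k₁, ((κ:ℝ) - i) with hPκdef
  set Pn : ℝ := ∏ i ∈ range k₁, ((n:ℝ) - i) with hPndef
  have hterm : ∀ i ∈ range k₁, (0:ℝ) < (κ:ℝ) - i ∧ (0:ℝ) < (n:ℝ) - i := by
    intro i hi
    rw [mem_range] at hi
    have hiR : (i:ℝ) < (k₁:ℝ) := by exact_mod_cast hi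
    constructor
    · have : (k₁:ℝ) ≤ κ := by exact_mod_cast hk1κ
      linarith
    · have : (k₁:ℝ) ≤ n := by exact_mod_cast hk1n
      linarith
  have hPκpos : 0 < Pκ := prod_pos fun i hi => (hterm i hi).1
  have hPnpos : 0 < Pn := prod_pos fun i hi => (hterm i hi).2
  have hchoosen : 0 < (n.choose k₁ : ℝ) := by exact_mod_cast Nat.choose_pos hk1n
  have hP1 : (κ.choose k₁ : ℝ) / (n.choose k₁) = Pκ / Pn := by
    rw [choose_ratio κ n k₁ hk1κ hκn', prod_div_distrib]
  have hεP1 : Pκ / Pn < ε := by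
    rw [← hP1, div_lt_iff₀ hchoosen]
    exact hmain
  -- lower bound on Pκ/Pn via exp
  have hfac : ∀ i ∈ range k₁, Real.exp (-L * (2*D/n)) ≤ ((κ:ℝ) - i) / ((n:ℝ) - i) := by
    intro i hi
    obtain ⟨hκi, hni⟩ := hterm i hi
    rw [mem_range] at hi
    have hiR : (i:ℝ) < (k₁:ℝ) := by exact_mod_cast hi
    have hmR : (k₁:ℝ) + 2*ζ*n ≤ (κ:ℝ) := le_trans hk1m hmκR
    rw [hLdef]
    apply exp_factor_bound ζ _ _ hζ0 hζ4
    · positivity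
    · -- 2ζ ≤ (κ - i)/(n - i)
      rw [le_div_iff₀ hni]
      have h8 : (0:ℝ) ≤ 2*ζ*i := by positivity
      linarith
    · -- 1 - 2D/n ≤ (κ - i)/(n - i)
      rw [← sub_nonneg]
      have key : ((κ:ℝ) - i) / ((n:ℝ) - i) - (1 - D/((n:ℝ) - i)) = 0 := by
        field_simp
        rw [hDdef]; ring
      have hi1 : (i:ℝ) + 1 ≤ (k₁:ℝ) := by exact_mod_cast hi
      have h1 : D/((n:ℝ) - i) ≤ 2*D/n := by
        rw [div_le_div_iff₀ hni hnpos]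
        have hD0' : (0:ℝ) ≤ D := by linarith
        have h9 : (0:ℝ) ≤ D*((n:ℝ) - 2*i) := mul_nonneg hD0' (by linarith)
        linarith
      linarith [key, h1]
  have hPlo : Real.exp (-L * (2*D/n)) ^ k₁ ≤ Pκ / Pn := by
    have := Finset.prod_le_prod (s := range k₁)
      (f := fun _ => Real.exp (-L * (2*D/n)))
      (g := fun i : ℕ => ((κ:ℝ) - i) / ((n:ℝ) - i))
      (fun i _ => le_of_lt (Real.exp_pos _)) hfac
    rw [prod_const, card_range] at this
    refine le_trans this ?_
    rw [le_div_iff₀ hPnpos, hPκdef, hPndef, ← prod_mul_distrib]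
    apply le_of_eq
    apply prod_congr rfl
    intro i hi
    rw [div_mul_cancel₀]
    exact ne_of_gt (hterm i hi).2
  have hεD : Real.exp (-(L * D)) < ε := by
    refine lt_of_le_of_lt (le_trans ?_ hPlo) hεP1
    rw [← Real.exp_nat_mul]
    apply Real.exp_le_exp.2
    have h0D : (0:ℝ) ≤ D := by linarith
    have h1 : (k₁:ℝ) * (2*D/n) ≤ D := by
      have h2 : (k₁:ℝ)*2/n ≤ 1 := by
        rw [div_le_one hnpos]; linarith
      calc (k₁:ℝ) * (2*D/n) = ((k₁:ℝ)*2/n)*D := by ring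
        _ ≤ 1*D := mul_le_mul_of_nonneg_right h2 h0D
        _ = D := one_mul D
    nlinarith [mul_le_mul_of_nonneg_left h1 (le_of_lt hLpos)]
  have hεc' : Real.exp (-(2*ζ) * D) ≤ ε ^ c' := by
    have h1 : Real.exp (-(L * D)) ^ c' ≤ ε ^ c' :=
      Real.rpow_le_rpow (le_of_lt (Real.exp_pos _)) (le_of_lt hεD) (le_of_lt hc'pos)
    refine le_trans (le_of_eq ?_) h1
    rw [← Real.exp_mul]
    congr 1
    linear_combination D * hc'L
  -- the Q * R decomposition
  set f : ℕ → ℝ := fun i => ((κ:ℝ) + 1 - i) / ((n:ℝ) - i) with hfdef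
  have hQR : ((κ+1).choose m : ℝ) / (n.choose m) = (∏ i ∈ range k₁, f i) * (∏ i ∈ Ico k₁ m, f i) := by
    have h1 : ((κ+1).choose m : ℝ) / (n.choose m) = ∏ i ∈ range m, f i := by
      rw [choose_ratio (κ+1) n m (by omega) (by omega)]
      apply prod_congr rfl
      intro i _
      simp only [hfdef]
      push_cast
      ring_nf
    rw [h1, range_eq_Ico, ← prod_Ico_consecutive f (Nat.zero_le k₁) hk1mnat,
      Nat.Ico_zero_eq_range]
  -- bound on Q
  have hfpos : ∀ i ∈ range m, (0:ℝ) ≤ f i ∧ f i ≤ ((κ:ℝ)+1)/n := by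
    intro i hi
    rw [mem_range] at hi
    have hiR : (i:ℝ) < (m:ℝ) := by exact_mod_cast hi
    have hκi : (0:ℝ) < (κ:ℝ) + 1 - i := by linarith
    have hmn : (m:ℝ) ≤ n := by linarith
    have hni : (0:ℝ) < (n:ℝ) - i := by linarith
    constructor
    · simp only [hfdef]; positivity
    · simp only [hfdef]
      rw [div_le_div_iff₀ hni hnpos]
      have h9 : (0:ℝ) ≤ (i:ℝ)*((n:ℝ) - (κ+1)) := mul_nonneg (Nat.cast_nonneg i) (by linarith)
      linarith
  have hQ : ∏ i ∈ range k₁, f i ≤ (1/(2*ζ)) * (Pκ / Pn) := by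
    have hd2 : (0:ℝ) < (κ:ℝ) + 1 - k₁ := by linarith
    have hQeq : ∏ i ∈ range k₁, f i = (((κ:ℝ)+1) * Pκ) / ((((κ:ℝ)+1) - k₁) * Pn) := by
      simp only [hfdef]
      rw [prod_div_distrib, ← hPndef]
      rw [div_eq_div_iff (ne_of_gt hPnpos) (by positivity)]
      rw [hPκdef, hPndef]
      linear_combination (∏ i ∈ range k₁, ((n:ℝ) - i)) * prod_shift (κ:ℝ) k₁
    rw [hQeq]
    rw [div_le_iff₀ (by positivity)]
    have hratio : 2*ζ*((κ:ℝ)+1) ≤ (κ:ℝ)+1-k₁ := by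
      have hx1 : 2*ζ*((κ:ℝ)+1) ≤ 2*ζ*n := mul_le_mul_of_nonneg_left hκnR (le_of_lt h2ζ)
      linarith
    have hrhs : (1/(2*ζ)) * (Pκ / Pn) * ((((κ:ℝ)+1) - k₁) * Pn) = (((κ:ℝ)+1-k₁)/(2*ζ)) * Pκ := by
      field_simp
    rw [hrhs]
    have hcoef : ((κ:ℝ)+1) ≤ ((κ:ℝ)+1-(k₁:ℝ))/(2*ζ) := by
      rw [le_div_iff₀ h2ζ]; linarith
    exact mul_le_mul_of_nonneg_right hcoef (le_of_lt hPκpos)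
  -- bound on R
  have hR : ∏ i ∈ Ico k₁ m, f i ≤ Real.exp (2*ζ) * Real.exp (-(2*ζ) * D) := by
    have h1 : ∏ i ∈ Ico k₁ m, f i ≤ (((κ:ℝ)+1)/n) ^ (m - k₁) := by
      have := Finset.prod_le_prod (s := Ico k₁ m) (f := f)
        (g := fun _ => ((κ:ℝ)+1)/n)
        (fun i hi => (hfpos i (by rw [mem_range]; exact (mem_Ico.1 hi).2)).1)
        (fun i hi => (hfpos i (by rw [mem_range]; exact (mem_Ico.1 hi).2)).2)
      rwa [prod_const, Nat.card_Ico] at this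
    refine le_trans h1 ?_
    have hbase : ((κ:ℝ)+1)/n ≤ Real.exp (-(D-1)/n) := by
      have h2 : ((κ:ℝ)+1)/n = 1 + (-(D-1)/n) := by
        field_simp
        rw [hDdef]; ring
      rw [h2]
      have := Real.add_one_le_exp (-(D-1)/n)
      linarith
    have hbase0 : (0:ℝ) ≤ ((κ:ℝ)+1)/n := by positivity
    have h3 : (((κ:ℝ)+1)/n) ^ (m - k₁) ≤ Real.exp (-(D-1)/n) ^ (m - k₁) :=
      pow_le_pow_left₀ hbase0 hbase _
    refine le_trans h3 ?_
    rw [← Real.exp_nat_mul, ← Real.exp_add]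
    apply Real.exp_le_exp.2
    have hcast : ((m - k₁ : ℕ) : ℝ) = (m:ℝ) - k₁ := by
      rw [Nat.cast_sub hk1mnat]
    rw [hcast]
    have hD0 : (0:ℝ) ≤ D - 1 := by linarith
    have h4 : 2*ζ*n ≤ (m:ℝ) - k₁ := by linarith
    have h5 : 2*ζ*(D-1) ≤ ((m:ℝ) - k₁) * ((D-1)/n) := by
      rw [mul_div_assoc', le_div_iff₀ hnpos]
      nlinarith [mul_le_mul_of_nonneg_right h4 hD0]
    have he : ((m:ℝ) - k₁) * (-(D-1)/n) = -(((m:ℝ) - k₁) * ((D-1)/n)) := by ring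
    linarith [h5, he]
  -- combine
  have hQpos : (0:ℝ) ≤ ∏ i ∈ range k₁, f i :=
    prod_nonneg fun i hi => (hfpos i (by rw [mem_range] at *; omega)).1
  have hRpos : (0:ℝ) ≤ ∏ i ∈ Ico k₁ m, f i :=
    prod_nonneg fun i hi => (hfpos i (by rw [mem_range]; exact (mem_Ico.1 hi).2)).1
  rw [hQR]
  have hQ' : ∏ i ∈ range k₁, f i ≤ (1/(2*ζ)) * ε := by
    refine le_trans hQ ?_
    apply mul_le_mul_of_nonneg_left (le_of_lt hεP1) (by positivity)
  have hR' : ∏ i ∈ Ico k₁ m, f i ≤ Real.exp (2*ζ) * ε ^ c' := by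
    refine le_trans hR ?_
    exact mul_le_mul_of_nonneg_left hεc' (le_of_lt (Real.exp_pos _))
  have hfinal : (∏ i ∈ range k₁, f i) * (∏ i ∈ Ico k₁ m, f i) ≤
      ((1/(2*ζ)) * ε) * (Real.exp (2*ζ) * ε ^ c') :=
    mul_le_mul hQ' hR' hRpos (by positivity)
  refine le_trans hfinal (le_of_eq ?_)
  rw [Real.rpow_add hε0, Real.rpow_one]
  ring

set_option maxHeartbeats 2000000 in
/-- For any ζ > 0 there exists c > 1 such that for cross-intersecting families
A ⊆ binom([n],k₁), B ⊆ binom([n],k₂) with ζn ≤ k₁,k₂ ≤ (1/2−ζ)n, if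
μ(A) > 1 − ε then μ(B) = O_ζ(ε^c). -/
theorem cross_intersecting_stability (ζ : ℝ) (hζ : 0 < ζ) :
    ∃ c : ℝ, 1 < c ∧ ∃ K : ℝ, 0 < K ∧
      ∀ (n k₁ k₂ : ℕ) (A B : Finset (Finset (Fin n))) (ε : ℝ),
        ζ * n ≤ (k₁ : ℝ) → (k₁ : ℝ) ≤ (1 / 2 - ζ) * n →
        ζ * n ≤ (k₂ : ℝ) → (k₂ : ℝ) ≤ (1 / 2 - ζ) * n →
        (∀ S ∈ A, S.card = k₁) → (∀ S ∈ B, S.card = k₂) →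
        (∀ S ∈ A, ∀ T ∈ B, (S ∩ T).Nonempty) →
        0 < ε → ε < 1 →
        1 - ε < (A.card : ℝ) / (n.choose k₁) →
        (B.card : ℝ) / (n.choose k₂) ≤ K * ε ^ c := by
  set ζ' : ℝ := min ζ (1/4) with hζ'def
  have hζ'0 : 0 < ζ' := lt_min hζ (by norm_num)
  have hζ'ζ : ζ' ≤ ζ := min_le_left _ _
  have hζ'4 : ζ' ≤ 1/4 := min_le_right _ _
  have h2ζ' : (0:ℝ) < 2*ζ' := by linarith
  have hlogpos : 0 < Real.log (1/(2*ζ')) := Real.log_pos (by rw [lt_div_iff₀ h2ζ']; linarith)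
  refine ⟨1 + 2*ζ'*(1 - 2*ζ') / Real.log (1/(2*ζ')), ?_, Real.exp (2*ζ') / (2*ζ'), by positivity, ?_⟩
  · have h1 : 0 < 2*ζ'*(1 - 2*ζ') := mul_pos h2ζ' (by linarith)
    have := div_pos h1 hlogpos
    linarith
  intro n k₁ k₂ A B ε hk1l0 hk1u0 hk2l0 hk2u0 hA hB hcross hε0 hε1 hμA
  have hn0 : (0:ℝ) ≤ n := Nat.cast_nonneg n
  have hk1l : ζ' * n ≤ (k₁:ℝ) := le_trans (mul_le_mul_of_nonneg_right hζ'ζ hn0) hk1l0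
  have hk1u : (k₁:ℝ) ≤ (1/2 - ζ') * n :=
    le_trans hk1u0 (mul_le_mul_of_nonneg_right (by linarith) hn0)
  have hk2l : ζ' * n ≤ (k₂:ℝ) := le_trans (mul_le_mul_of_nonneg_right hζ'ζ hn0) hk2l0
  have hk2u : (k₂:ℝ) ≤ (1/2 - ζ') * n :=
    le_trans hk2u0 (mul_le_mul_of_nonneg_right (by linarith) hn0)
  have hhalf : (0:ℝ) ≤ (1/2 + ζ') * n := mul_nonneg (by linarith) hn0
  have hk1nR : (k₁:ℝ) ≤ n := by linarith
  have hk2nR : (k₂:ℝ) ≤ n := by linarith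
  have hk1n : k₁ ≤ n := by exact_mod_cast hk1nR
  have hk2n : k₂ ≤ n := by exact_mod_cast hk2nR
  have hchoose1pos : (0:ℝ) < (n.choose k₁:ℝ) := by exact_mod_cast Nat.choose_pos hk1n
  have hchoose2pos : (0:ℝ) < (n.choose k₂:ℝ) := by exact_mod_cast Nat.choose_pos hk2n
  -- A is nonempty
  have hApos : A.Nonempty := by
    rw [← Finset.card_pos]
    by_contra hcon
    push_neg at hcon
    have h0 : A.card = 0 := by omega
    rw [h0] at hμA
    simp at hμA
    linarith
  obtain ⟨S, hS⟩ := hApos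
  -- B empty case is trivial
  rcases B.eq_empty_or_nonempty with hBe | hBne
  · rw [hBe]
    simp only [Finset.card_empty, Nat.cast_zero, zero_div]
    have h1 : (0:ℝ) < ε ^ ((1:ℝ) + 2*ζ'*(1 - 2*ζ') / Real.log (1/(2*ζ'))) :=
      Real.rpow_pos_of_pos hε0 _
    positivity
  -- n ≥ 1
  have hn1 : 1 ≤ n := by
    by_contra hcon
    push_neg at hcon
    have hn00 : n = 0 := by omega
    subst hn00
    obtain ⟨T, hT⟩ := hBne
    have hST := hcross S hS T hT
    rw [Finset.eq_empty_of_isEmpty (S ∩ T)] at hST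
    exact Finset.not_nonempty_empty hST
  have hnR1 : (1:ℝ) ≤ (n:ℝ) := by exact_mod_cast hn1
  -- k₂ ≥ 1 and m
  have hk2pos : 0 < k₂ := by
    have h : (0:ℝ) < (k₂:ℝ) := lt_of_lt_of_le (mul_pos hζ'0 (by linarith)) hk2l
    exact_mod_cast h
  set m : ℕ := n - k₂ with hmdef
  have hmcast : (m:ℝ) = (n:ℝ) - k₂ := by
    rw [hmdef]; exact Nat.cast_sub hk2n
  have hml : (1/2 + ζ') * n ≤ (m:ℝ) := by rw [hmcast]; linarith
  have h2ζ'n : (0:ℝ) ≤ 2*ζ'*n := mul_nonneg (by linarith) hn0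
  have hk1m : k₁ ≤ m := by
    have : (k₁:ℝ) ≤ (m:ℝ) := by linarith
    exact_mod_cast this
  have hmn : m < n := by omega
  -- B is not the full layer
  have hk12 : k₁ + k₂ ≤ n := by
    have h1 : (k₁:ℝ) + k₂ ≤ (1 - 2*ζ')*n := by linarith
    have h2 : (1 - 2*ζ')*(n:ℝ) ≤ n := by linarith
    have h3 : ((k₁ + k₂ : ℕ):ℝ) ≤ (n:ℝ) := by push_cast; linarith
    exact_mod_cast h3
  have hScompl : Sᶜ.card = n - k₁ := by
    rw [Finset.card_compl, hA S hS, Fintype.card_fin]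
  obtain ⟨T₀, hT₀sub, hT₀card⟩ :=
    Finset.exists_subset_card_eq (show k₂ ≤ Sᶜ.card by rw [hScompl]; omega)
  have hT₀B : T₀ ∉ B := by
    intro hT₀B
    obtain ⟨x, hx⟩ := hcross S hS T₀ hT₀B
    rw [Finset.mem_inter] at hx
    have := hT₀sub hx.2
    rw [Finset.mem_compl] at this
    exact this hx.1
  have hBsub : B ⊆ Finset.powersetCard k₂ Finset.univ :=
    fun T hT => Finset.mem_powersetCard_univ.2 (hB T hT)
  have hlayer2 : (Finset.powersetCard k₂ (Finset.univ : Finset (Fin n))).card = n.choose k₂ := by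
    rw [Finset.card_powersetCard, Finset.card_univ, Fintype.card_fin]
  have hBlt : B.card < n.choose k₂ := by
    rw [← hlayer2]
    apply Finset.card_lt_card
    rw [Finset.ssubset_iff_of_subset hBsub]
    exact ⟨T₀, Finset.mem_powersetCard_univ.2 hT₀card, hT₀B⟩
  have hB1 : 1 ≤ B.card := Finset.card_pos.2 hBne
  have hchoosesymm : n.choose m = n.choose k₂ := by
    rw [hmdef]; exact Nat.choose_symm hk2n
  -- the threshold κ
  set κ : ℕ := Nat.findGreatest (fun j => Nat.choose j m ≤ B.card) (n-1) with hκdef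
  have hPm : Nat.choose m m ≤ B.card := by rw [Nat.choose_self]; exact hB1
  have hmn1 : m ≤ n-1 := by omega
  have hmκ : m ≤ κ := Nat.le_findGreatest hmn1 hPm
  have hκn1 : κ ≤ n-1 := Nat.findGreatest_le _
  have hκchoose : Nat.choose (Nat.findGreatest (fun j => Nat.choose j m ≤ B.card) (n-1)) m ≤ B.card :=
    Nat.findGreatest_spec (P := fun j => Nat.choose j m ≤ B.card) hmn1 hPm
  rw [← hκdef] at hκchoose
  have hκ1 : B.card < Nat.choose (κ+1) m := by
    rcases le_or_gt (κ+1) (n-1) with h | h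
    · have h0 : Nat.findGreatest (fun j => Nat.choose j m ≤ B.card) (n-1) < κ+1 := by
        rw [← hκdef]; omega
      have hng : ¬ (Nat.choose (κ+1) m ≤ B.card) :=
        Nat.findGreatest_is_greatest (P := fun j => Nat.choose j m ≤ B.card) h0 h
      omega
    · have hκeq : κ+1 = n := by omega
      rw [hκeq, hchoosesymm]
      exact hBlt
  -- Kruskal–Katona (Lovász form)
  set 𝒞 : Finset (Finset (Fin n)) := B.image compl with h𝒞def
  have h𝒞card : 𝒞.card = B.card := Finset.card_image_of_injective _ compl_injective
  have h𝒞sized : (↑𝒞 : Set (Finset (Fin n))).Sized m := by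
    intro s hs
    rw [Finset.mem_coe, h𝒞def, Finset.mem_image] at hs
    obtain ⟨T, hT, rfl⟩ := hs
    rw [Finset.card_compl, hB T hT, Fintype.card_fin]
  have hkk := Finset.kruskal_katona_lovasz_form (i := m - k₁)
    (Nat.sub_le m k₁) hmκ (by omega) h𝒞sized (by rw [h𝒞card]; exact hκchoose)
  rw [Nat.sub_sub_self hk1m] at hkk
  have hinst : (LinearOrder.toDecidableEq : DecidableEq (Fin n)) = instDecidableEqFin n :=
    Subsingleton.elim _ _
  -- the iterated shadow avoids A
  have hAsub : A ⊆ Finset.powersetCard k₁ Finset.univ :=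
    fun s hs => Finset.mem_powersetCard_univ.2 (hA s hs)
  have hlayer1 : (Finset.powersetCard k₁ (Finset.univ : Finset (Fin n))).card = n.choose k₁ := by
    rw [Finset.card_powersetCard, Finset.card_univ, Fintype.card_fin]
  have hshsub : Finset.shadow^[m - k₁] 𝒞 ⊆
      Finset.powersetCard k₁ Finset.univ \ A := by
    intro s hs
    rw [Finset.mem_shadow_iterate_iff_exists_sdiff] at hs
    obtain ⟨t, ht, hst, hcard⟩ := hs
    have htm : t.card = m := h𝒞sized (Finset.mem_coe.2 ht)
    rw [h𝒞def, Finset.mem_image] at ht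
    obtain ⟨T, hTB, rfl⟩ := ht
    have hscard : s.card = k₁ := by
      have h1 : (Tᶜ \ s).card = Tᶜ.card - s.card := Finset.card_sdiff_of_subset hst
      have h2 : s.card ≤ Tᶜ.card := Finset.card_le_card hst
      omega
    rw [Finset.mem_sdiff]
    refine ⟨Finset.mem_powersetCard_univ.2 hscard, ?_⟩
    intro hsA
    obtain ⟨x, hx⟩ := hcross s hsA T hTB
    rw [Finset.mem_inter] at hx
    have hxc := hst hx.1
    rw [Finset.mem_compl] at hxc
    exact hxc hx.2
  have hAcard_le : A.card ≤ n.choose k₁ := by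
    have := Finset.card_le_card hAsub
    rwa [hlayer1] at this
  have hcard_sh : (Finset.shadow^[m - k₁] 𝒞).card ≤ n.choose k₁ - A.card := by
    have h1 := Finset.card_le_card hshsub
    rwa [Finset.card_sdiff_of_subset hAsub, hlayer1] at h1
  have hmainN : κ.choose k₁ ≤ n.choose k₁ - A.card := le_trans hkk hcard_sh
  have hAreal : (1 - ε) * (n.choose k₁:ℝ) < A.card := (lt_div_iff₀ hchoose1pos).1 hμA
  have hmainR : (κ.choose k₁ : ℝ) < ε * n.choose k₁ := by
    have h1 : ((κ.choose k₁ : ℕ):ℝ) ≤ ((n.choose k₁ - A.card : ℕ):ℝ) := by exact_mod_cast hmainN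
    rw [Nat.cast_sub hAcard_le] at h1
    linarith
  have harith := arith_main ζ' ε n k₁ m κ hζ'0 hζ'4 hk1l hk1u hml hmκ (by omega) hε0 hmainR
  have hchoosempos : (0:ℝ) < (n.choose m : ℝ) := by rw [hchoosesymm]; exact hchoose2pos
  calc (B.card:ℝ)/(n.choose k₂)
      ≤ ((κ+1).choose m : ℝ)/(n.choose m) := by
        rw [hchoosesymm]
        have hcast : (B.card:ℝ) ≤ (((κ+1).choose m : ℕ) : ℝ) := by exact_mod_cast le_of_lt hκ1
        gcongr
    _ ≤ _ := harith
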